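/- Let G be a finite simple graph with 12 vertices, 21 edges, and minimum degree at least 3, and suppose that for every pair of distinct vertices a, b the induced subgraph G−a,b has at least 13 edges (equivalently, deg(a)+deg(b) ≤ 8 whenever a and b are non-adjacent, and deg(a)+deg(b) ≤ 9 whenever they are adjacent). Then the multiset of vertex degrees of G is (3^7,4^4,5) or (3^6,4^6). -/

import Mathlib

open scoped Classical

open Finset

private lemma multiset_34 (N : Multiset ℕ) (h34 : ∀ x ∈ N, x = 3 ∨ x = 4)
    (c3 c4 : ℕ) (hc : Multiset.card N = c3 + c4) (hs : N.sum = 3 * c3 + 4 * c4) :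
    N = Multiset.replicate c3 3 + Multiset.replicate c4 4 := by
  classical
  have hsplit : N.filter (· = 3) + N.filter (fun x => ¬ x = 3) = N :=
    Multiset.filter_add_not _ N
  set N3 := N.filter (· = 3) with hN3
  set N4 := N.filter (fun x => ¬ x = 3) with hN4
  have h3 : N3 = Multiset.replicate (Multiset.card N3) 3 := by
    rw [Multiset.eq_replicate_card]; intro x hx; exact (Multiset.mem_filter.1 hx).2
  have h4 : N4 = Multiset.replicate (Multiset.card N4) 4 := by
    rw [Multiset.eq_replicate_card]; intro x hx
    have h := Multiset.mem_filter.1 hx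
    rcases h34 x h.1 with h' | h'
    · exact absurd h' h.2
    · exact h'
  have hcard : Multiset.card N3 + Multiset.card N4 = c3 + c4 := by
    rw [← hc, ← hsplit, Multiset.card_add]
  have hsum : 3 * Multiset.card N3 + 4 * Multiset.card N4 = 3 * c3 + 4 * c4 := by
    rw [← hs, ← hsplit, Multiset.sum_add]
    rw [h3, h4, Multiset.sum_replicate, Multiset.sum_replicate]
    simp [Multiset.card_replicate, mul_comm]
  have h3c : Multiset.card N3 = c3 := by omega
  have h4c : Multiset.card N4 = c4 := by omega
  rw [← hsplit, h3, h4, h3c, h4c]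


/-- Let G be a finite simple graph with 12 vertices, 21 edges, and
minimum degree at least 3, such that for every pair of distinct vertices a, b
the induced subgraph G−a,b has at least 13 edges. Then the degree multiset of G
is (3^7,4^4,5) or (3^6,4^6). -/
theorem stmt_8 {V : Type*} [Fintype V] (G : SimpleGraph V)
    (hV : Fintype.card V = 12) (hE : G.edgeFinset.card = 21)
    (hmin : ∀ v : V, 3 ≤ G.degree v)
    (hdel : ∀ a b : V, a ≠ b →
      13 ≤ (G.induce ({a, b}ᶜ : Set V)).edgeFinset.card) :
    (Finset.univ : Finset V).val.map (fun v => G.degree v) =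
        (↑[3, 3, 3, 3, 3, 3, 3, 4, 4, 4, 4, 5] : Multiset ℕ) ∨
    (Finset.univ : Finset V).val.map (fun v => G.degree v) =
        (↑[3, 3, 3, 3, 3, 3, 4, 4, 4, 4, 4, 4] : Multiset ℕ) := by
  classical
  -- Key inequality: degree sums of distinct vertices are at most 9
  have key : ∀ a b : V, a ≠ b → G.degree a + G.degree b ≤ 9 := by
    intro a b hab
    have hdel' := hdel a b hab
    set A := G.incidenceFinset a with hA
    set B := G.incidenceFinset b with hB
    have hAsub : A ∪ B ⊆ G.edgeFinset := by
      intro e he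
      rw [Finset.mem_union] at he
      rcases he with h | h <;>
        rw [SimpleGraph.mem_incidenceFinset] at h <;>
        exact SimpleGraph.mem_edgeFinset.2 h.1
    have hinter : (A ∩ B).card ≤ 1 := by
      have hsub : A ∩ B ⊆ {s(a, b)} := by
        intro e he
        rw [Finset.mem_inter] at he
        rw [Finset.mem_singleton]
        obtain ⟨h1, h2⟩ := he
        rw [SimpleGraph.mem_incidenceFinset] at h1 h2
        exact G.incidenceSet_inter_incidenceSet_subset hab ⟨h1, h2⟩
      calc (A ∩ B).card ≤ ({s(a, b)} : Finset (Sym2 V)).card := Finset.card_le_card hsub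
        _ = 1 := Finset.card_singleton _
    have hcardA : A.card = G.degree a := by rw [hA, G.card_incidenceFinset_eq_degree]
    have hcardB : B.card = G.degree b := by rw [hB, G.card_incidenceFinset_eq_degree]
    have hdeg : G.degree a + G.degree b ≤ (A ∪ B).card + 1 := by
      have := Finset.card_union_add_card_inter A B
      omega
    have hinj : (G.induce ({a, b}ᶜ : Set V)).edgeFinset.card ≤
        (G.edgeFinset \ (A ∪ B)).card := by
      apply Finset.card_le_card_of_injOn (fun e => Sym2.map Subtype.val e)
      · intro e he
        rw [Finset.mem_coe, SimpleGraph.mem_edgeFinset] at he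
        induction e using Sym2.ind with
        | _ x y =>
          have hadj : G.Adj x.val y.val := he
          rw [Finset.mem_coe, Finset.mem_sdiff]; beta_reduce
          constructor
          · rw [Sym2.map_pair_eq, SimpleGraph.mem_edgeFinset]
            exact hadj
          · intro hmem
            rw [Finset.mem_union] at hmem
            have hx := x.2
            have hy := y.2
            simp only [Set.mem_compl_iff, Set.mem_insert_iff, Set.mem_singleton_iff,
              not_or] at hx hy
            rcases hmem with h | h <;>
            · rw [SimpleGraph.mem_incidenceFinset] at h
              obtain ⟨-, hm⟩ := h
              rw [Sym2.map_pair_eq, Sym2.mem_iff] at hm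
              rcases hm with hm | hm <;> simp_all
      · intro e1 _ e2 _ h
        exact Sym2.map.injective Subtype.val_injective h
    have hsdiff : (G.edgeFinset \ (A ∪ B)).card = 21 - (A ∪ B).card := by
      rw [Finset.card_sdiff_of_subset hAsub, hE]
    have hABle : (A ∪ B).card ≤ 21 := by
      calc (A ∪ B).card ≤ G.edgeFinset.card := Finset.card_le_card hAsub
        _ = 21 := hE
    omega
  have hsum : ∑ v : V, G.degree v = 42 := by
    rw [G.sum_degrees_eq_twice_card_edges, hE]
  have hnt : Nontrivial V := by
    rw [← Fintype.one_lt_card_iff_nontrivial]; omega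
  have hle6 : ∀ v : V, G.degree v ≤ 6 := by
    intro v
    obtain ⟨w, hw⟩ := exists_ne v
    have := key v w (Ne.symm hw)
    have := hmin w
    omega
  by_cases hall : ∀ v : V, G.degree v ≤ 4
  · -- no vertex of degree ≥ 5
    right
    have := multiset_34 ((Finset.univ : Finset V).val.map (fun v => G.degree v))
      (by
        intro x hx
        rw [Multiset.mem_map] at hx
        obtain ⟨v, -, rfl⟩ := hx
        have := hmin v; have := hall v; omega)
      6 6
      (by rw [Multiset.card_map]; exact hV)
      (by
        have : ((Finset.univ : Finset V).val.map (fun v => G.degree v)).sum =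
            ∑ v : V, G.degree v := rfl
        rw [this, hsum])
    rw [this]
    decide
  · left
    push_neg at hall
    obtain ⟨a, ha⟩ := hall
    have hothers : ∀ b : V, b ≠ a → G.degree b ≤ 4 := by
      intro b hb
      have := key a b (Ne.symm hb)
      omega
    have hmemA : a ∈ (Finset.univ : Finset V) := Finset.mem_univ a
    have hcons : (Finset.univ : Finset V).val = a ::ₘ ((Finset.univ : Finset V).erase a).val := by
      rw [Finset.erase_val]
      exact (Multiset.cons_erase (Finset.mem_def.1 hmemA)).symm
    have hsum_erase : ∑ b ∈ (Finset.univ : Finset V).erase a, G.degree b = 42 - G.degree a := by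
      have : G.degree a + ∑ b ∈ (Finset.univ : Finset V).erase a, G.degree b =
          ∑ v : V, G.degree v :=
        Finset.add_sum_erase (Finset.univ : Finset V) (fun v => G.degree v) hmemA
      have h6 := hle6 a
      omega
    have hcard_erase : ((Finset.univ : Finset V).erase a).card = 11 := by
      rw [Finset.card_erase_of_mem hmemA, Finset.card_univ, hV]
    have hne6 : G.degree a ≠ 6 := by
      intro h6
      have h3 : ∀ b ∈ (Finset.univ : Finset V).erase a, G.degree b = 3 := by
        intro b hb
        have hba : b ≠ a := (Finset.mem_erase.1 hb).1
        have := key a b (Ne.symm hba)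
        have := hmin b
        omega
      have : ∑ b ∈ (Finset.univ : Finset V).erase a, G.degree b = 33 := by
        rw [Finset.sum_congr rfl h3, Finset.sum_const, hcard_erase, smul_eq_mul]
      omega
    have ha5 : G.degree a = 5 := by
      have := hle6 a; omega
    have := multiset_34 (((Finset.univ : Finset V).erase a).val.map (fun v => G.degree v))
      (by
        intro x hx
        rw [Multiset.mem_map] at hx
        obtain ⟨v, hv, rfl⟩ := hx
        have hva : v ≠ a := (Finset.mem_erase.1 (Finset.mem_def.2 hv)).1
        have := hothers v hva
        have := hmin v
        omega)
      7 4
      (by rw [Multiset.card_map]; exact hcard_erase)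
      (by
        have : (((Finset.univ : Finset V).erase a).val.map (fun v => G.degree v)).sum =
            ∑ b ∈ (Finset.univ : Finset V).erase a, G.degree b := rfl
        rw [this, hsum_erase, ha5])
    rw [hcons, Multiset.map_cons, ha5, this]
    decide
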